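/- Under the same hypotheses, the function g₂(y) := ∫₀^y q(z) ∂_y B(z, y−z) dz satisfies |g₂(y)| ≤ |q(y)| ∫₀^y |q| + 2 η(0)² e^{γ(0)} η(y) for all y ≥ 0. -/

import Mathlib

open MeasureTheory Set

/-- Same setting as before: `q` supported on `[0,∞)` with `∫₀^∞ (1+t)|q(t)|dt < ∞`,
`η(x) = ∫ₓ^∞ |q|`, `γ(x) = ∫ₓ^∞ (t−x)|q(t)|dt`, the kernel `B` satisfying the
Deift–Trubowitz estimates (`By` denoting `∂_y B`). Then
`g₂(y) = ∫₀^y q(z) ∂_y B(z, y−z) dz` satisfies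
`|g₂(y)| ≤ |q(y)| ∫₀^y |q| + 2η(0)² e^{γ(0)} η(y)` for all `y ≥ 0`. -/
theorem stmt_4 (q : ℝ → ℝ) (B By : ℝ → ℝ → ℝ) (η γ : ℝ → ℝ)
    (hsupp : ∀ x < (0:ℝ), q x = 0)
    (hint : IntegrableOn (fun t => (1 + t) * |q t|) (Ioi 0))
    (hη : ∀ x, η x = ∫ t in Ioi x, |q t|)
    (hγ : ∀ x, γ x = ∫ t in Ioi x, (t - x) * |q t|)
    (hB : ∀ x y : ℝ, 0 ≤ x → 0 ≤ y → |B x y| ≤ η (x + y) * Real.exp (γ x))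
    (hBy : ∀ x y : ℝ, 0 ≤ x → 0 ≤ y →
      |By x y + q (x + y)| ≤ 2 * η (x + y) * η x * Real.exp (γ x)) :
    ∀ y : ℝ, 0 ≤ y →
      |∫ z in (0:ℝ)..y, q z * By z (y - z)|
        ≤ |q y| * (∫ z in (0:ℝ)..y, |q z|) + 2 * (η 0) ^ 2 * Real.exp (γ 0) * η y := by
  -- a.e. strong measurability of |q| on (0,∞)
  have hmeas : AEStronglyMeasurable (fun t => |q t|) (volume.restrict (Ioi (0:ℝ))) := by
    have h1 : AEStronglyMeasurable (fun t => ((1 + t) * |q t|) * (1 + max t 0)⁻¹)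
        (volume.restrict (Ioi (0:ℝ))) :=
      hint.aestronglyMeasurable.mul
        ((measurable_const.add (measurable_id.max measurable_const)).inv.aestronglyMeasurable)
    refine h1.congr ?_
    filter_upwards [ae_restrict_mem measurableSet_Ioi] with t ht
    have h0 : (0:ℝ) < t := ht
    rw [max_eq_left h0.le]
    have h1t : (1:ℝ) + t ≠ 0 := by linarith
    field_simp
  have hqI : IntegrableOn (fun t => |q t|) (Ioi (0:ℝ)) := by
    refine Integrable.mono' hint hmeas ?_
    filter_upwards [ae_restrict_mem measurableSet_Ioi] with t ht
    have h0 : (0:ℝ) < t := ht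
    have := abs_nonneg (q t)
    rw [Real.norm_eq_abs, abs_abs]
    nlinarith
  have htqI : IntegrableOn (fun t => t * |q t|) (Ioi (0:ℝ)) := by
    refine Integrable.mono' hint (measurable_id.aestronglyMeasurable.mul hmeas) ?_
    filter_upwards [ae_restrict_mem measurableSet_Ioi] with t ht
    have h0 : (0:ℝ) < t := ht
    have := abs_nonneg (q t)
    rw [Real.norm_eq_abs, abs_of_nonneg (by nlinarith : (0:ℝ) ≤ t * |q t|)]
    nlinarith
  have hηnonneg : ∀ x : ℝ, 0 ≤ η x := fun x => by
    rw [hη]; exact setIntegral_nonneg measurableSet_Ioi fun t _ => abs_nonneg _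
  have hηmono : ∀ z : ℝ, 0 ≤ z → η z ≤ η 0 := by
    intro z hz
    rw [hη, hη]
    exact setIntegral_mono_set hqI (Filter.Eventually.of_forall fun t => abs_nonneg _)
      (HasSubset.Subset.eventuallyLE (Ioi_subset_Ioi hz))
  have hγmono : ∀ z : ℝ, 0 ≤ z → γ z ≤ γ 0 := by
    intro z hz
    rw [hγ, hγ]
    have hIz : IntegrableOn (fun t => t * |q t|) (Ioi z) :=
      htqI.mono_set (Ioi_subset_Ioi hz)
    have hIz' : IntegrableOn (fun t => (t - z) * |q t|) (Ioi z) := by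
      have := hIz.sub (((hqI.mono_set (Ioi_subset_Ioi hz))).const_mul z)
      simpa [sub_mul, Pi.sub_def] using this
    have step1 : (∫ t in Ioi z, (t - z) * |q t|) ≤ ∫ t in Ioi z, t * |q t| := by
      refine setIntegral_mono_on hIz' hIz measurableSet_Ioi ?_
      intro t ht
      have : (0:ℝ) ≤ |q t| := abs_nonneg _
      nlinarith
    have step2 : (∫ t in Ioi z, t * |q t|) ≤ ∫ t in Ioi (0:ℝ), t * |q t| := by
      refine setIntegral_mono_set htqI ?_
        (HasSubset.Subset.eventuallyLE (Ioi_subset_Ioi hz))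
      filter_upwards [ae_restrict_mem measurableSet_Ioi] with t ht
      have h0 : (0:ℝ) < t := ht
      exact mul_nonneg h0.le (abs_nonneg _)
    simpa [sub_zero] using step1.trans step2
  intro y hy
  have habs : IntervalIntegrable (fun z => |q z|) volume 0 y := by
    rw [intervalIntegrable_iff_integrableOn_Ioc_of_le hy]
    exact hqI.mono_set Ioc_subset_Ioi_self
  have hqint_nonneg : (0:ℝ) ≤ ∫ z in (0:ℝ)..y, |q z| :=
    intervalIntegral.integral_nonneg hy fun z _ => abs_nonneg _
  have hint_le : (∫ z in (0:ℝ)..y, |q z|) ≤ η 0 := by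
    rw [intervalIntegral.integral_of_le hy, hη]
    exact setIntegral_mono_set hqI (Filter.Eventually.of_forall fun t => abs_nonneg _)
      (HasSubset.Subset.eventuallyLE Ioc_subset_Ioi_self)
  set C : ℝ := 2 * η y * η 0 * Real.exp (γ 0) with hC
  have hCnonneg : 0 ≤ C := by
    have := hηnonneg y; have := hηnonneg 0; have := Real.exp_pos (γ 0)
    positivity
  by_cases hI : IntervalIntegrable (fun z => q z * By z (y - z)) volume 0 y
  · -- pointwise bound on [0,y]
    have hpt : ∀ z ∈ Icc (0:ℝ) y,
        |q z * By z (y - z)| ≤ |q z| * |q y| + C * |q z| := by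
      intro z hz
      obtain ⟨h0z, hzy⟩ := hz
      have hyz : (0:ℝ) ≤ y - z := by linarith
      have hb := hBy z (y - z) h0z hyz
      have he : z + (y - z) = y := by ring
      rw [he] at hb
      have hBb : |By z (y - z)| ≤ 2 * η y * η z * Real.exp (γ z) + |q y| := by
        have h' : By z (y - z) = (By z (y - z) + q y) + (-(q y)) := by ring
        calc |By z (y - z)| = |(By z (y - z) + q y) + (-(q y))| := by rw [← h']
          _ ≤ |By z (y - z) + q y| + |(-(q y))| := abs_add_le _ _
          _ = |By z (y - z) + q y| + |q y| := by rw [abs_neg]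
          _ ≤ 2 * η y * η z * Real.exp (γ z) + |q y| := by linarith
      have hCz : 2 * η y * η z * Real.exp (γ z) ≤ C := by
        have h1 := hηmono z h0z
        have h2 : Real.exp (γ z) ≤ Real.exp (γ 0) := Real.exp_le_exp.mpr (hγmono z h0z)
        have h3 := hηnonneg y
        have h4 := hηnonneg z
        have h5 := (Real.exp_pos (γ z)).le
        have h6 := hηnonneg 0
        rw [hC]
        calc 2 * η y * η z * Real.exp (γ z) ≤ 2 * η y * η 0 * Real.exp (γ z) :=
              mul_le_mul_of_nonneg_right
                (mul_le_mul_of_nonneg_left h1 (by linarith : (0:ℝ) ≤ 2 * η y)) h5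
          _ ≤ 2 * η y * η 0 * Real.exp (γ 0) :=
              mul_le_mul_of_nonneg_left h2 (by positivity)
      rw [abs_mul]
      have hq0 := abs_nonneg (q z)
      nlinarith [abs_nonneg (By z (y - z))]
    have step1 : |∫ z in (0:ℝ)..y, q z * By z (y - z)|
        ≤ ∫ z in (0:ℝ)..y, |q z * By z (y - z)| :=
      intervalIntegral.abs_integral_le_integral_abs hy
    have hrhsInt : IntervalIntegrable (fun z => |q z| * |q y| + C * |q z|) volume 0 y :=
      (habs.mul_const _).add (habs.const_mul C)
    have step2 : (∫ z in (0:ℝ)..y, |q z * By z (y - z)|)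
        ≤ ∫ z in (0:ℝ)..y, (|q z| * |q y| + C * |q z|) :=
      intervalIntegral.integral_mono_on hy hI.abs hrhsInt hpt
    have step3 : (∫ z in (0:ℝ)..y, (|q z| * |q y| + C * |q z|))
        = (∫ z in (0:ℝ)..y, |q z|) * |q y| + C * ∫ z in (0:ℝ)..y, |q z| := by
      rw [intervalIntegral.integral_add (habs.mul_const _) (habs.const_mul C),
        intervalIntegral.integral_mul_const, intervalIntegral.integral_const_mul]
    have step4 : C * (∫ z in (0:ℝ)..y, |q z|) ≤ 2 * (η 0) ^ 2 * Real.exp (γ 0) * η y := by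
      have : C * (∫ z in (0:ℝ)..y, |q z|) ≤ C * η 0 := by
        exact mul_le_mul_of_nonneg_left hint_le hCnonneg
      calc C * (∫ z in (0:ℝ)..y, |q z|) ≤ C * η 0 := this
        _ = 2 * (η 0) ^ 2 * Real.exp (γ 0) * η y := by rw [hC]; ring
    calc |∫ z in (0:ℝ)..y, q z * By z (y - z)|
        ≤ (∫ z in (0:ℝ)..y, |q z|) * |q y| + C * ∫ z in (0:ℝ)..y, |q z| := by
          rw [← step3]; exact step1.trans step2
      _ ≤ |q y| * (∫ z in (0:ℝ)..y, |q z|) + 2 * (η 0) ^ 2 * Real.exp (γ 0) * η y := by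
          rw [mul_comm]; linarith [step4]
  · rw [intervalIntegral.integral_undef hI]
    have h1 : 0 ≤ |q y| * ∫ z in (0:ℝ)..y, |q z| := mul_nonneg (abs_nonneg _) hqint_nonneg
    have h2 : 0 ≤ 2 * (η 0) ^ 2 * Real.exp (γ 0) * η y := by
      have := hηnonneg y; have := hηnonneg 0; have := Real.exp_pos (γ 0)
      positivity
    simpa using by linarith
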